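/- Suppose c̃ is ε-inverse feasible: there exists ũ with ⟨μ_E, c̃ − T*_γ ũ⟩ ≤ ε and c̃ − T*_γ ũ ≥ −ε pointwise on X × A. Define c = T*_γ ũ. Then c is exactly inverse feasible with certificate ũ (trivially, c − T*_γ ũ = 0), and the pair satisfies: ⟨μ_E, c̃ − c⟩ ≤ ε and c − c̃ ≤ ε pointwise. Consequently, for any two occupation-type measures μ̃ and μ_E each of total mass 1/(1−γ) with ⟨μ̃, c̃⟩ ≤ ⟨μ_E, c̃⟩, one has ⟨μ̃ − μ_E, c⟩ ≤ ⟨μ̃, c − c̃⟩ + ⟨μ_E, c̃ − c⟩ ≤ ε/(1−γ) + ε = ((2−γ)/(1−γ))·ε. -/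

import Mathlib

open MeasureTheory

/-- Proposition 3.4 computation: with c = T*_γ ũ exactly inverse feasible, the
performance gap of the expert under c is at most (2−γ)/(1−γ)·ε. -/
theorem stmt16 {X A : Type*} [MeasurableSpace X] [MeasurableSpace A]
    (γ ε : ℝ) (hγ0 : 0 < γ) (hγ1 : γ < 1) (hε : 0 ≤ ε)
    (μE μt : Measure (X × A)) [IsFiniteMeasure μE] [IsFiniteMeasure μt]
    (hμE : μE Set.univ = ENNReal.ofReal (1 / (1 - γ)))
    (hμt : μt Set.univ = ENNReal.ofReal (1 / (1 - γ)))
    (T : (X → ℝ) → (X × A → ℝ))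
    (ct : X × A → ℝ) (ut : X → ℝ)
    (h1 : ∫ p, (ct p - T ut p) ∂μE ≤ ε)
    (h2 : ∀ p, ct p - T ut p ≥ -ε)
    (hintE : Integrable ct μE) (hintt : Integrable ct μt)
    (hTE : Integrable (T ut) μE) (hTt : Integrable (T ut) μt)
    (hopt : ∫ p, ct p ∂μt ≤ ∫ p, ct p ∂μE) :
    (∀ p, T ut p - ct p ≤ ε) ∧
    (∫ p, T ut p ∂μt - ∫ p, T ut p ∂μE ≤ (2 - γ) / (1 - γ) * ε) := by
  have hg : (0:ℝ) < 1 - γ := by linarith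
  have hpt : ∀ p, T ut p - ct p ≤ ε := fun p => by have := h2 p; linarith
  refine ⟨hpt, ?_⟩
  have hmass : (μt Set.univ).toReal = 1 / (1 - γ) := by
    rw [hμt, ENNReal.toReal_ofReal (by positivity)]
  have hb1 : ∫ p, (T ut p - ct p) ∂μt ≤ ε * (1 / (1 - γ)) := by
    calc ∫ p, (T ut p - ct p) ∂μt ≤ ∫ _p, ε ∂μt :=
          integral_mono (hTt.sub hintt) (integrable_const ε) hpt
      _ = ε * (1 / (1 - γ)) := by
          rw [integral_const, smul_eq_mul, measureReal_def, hmass, mul_comm]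
  have hit : ∫ p, (T ut p - ct p) ∂μt = ∫ p, T ut p ∂μt - ∫ p, ct p ∂μt :=
    integral_sub hTt hintt
  have hiE : ∫ p, (ct p - T ut p) ∂μE = ∫ p, ct p ∂μE - ∫ p, T ut p ∂μE :=
    integral_sub hintE hTE
  have key : (2 - γ) / (1 - γ) * ε = ε * (1 / (1 - γ)) + ε := by
    field_simp; ring
  rw [key]
  rw [hit] at hb1
  rw [hiE] at h1
  linarith
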